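/- Let γ be an n×n matrix with integer entries such that every eigenvalue of γ, viewed as a complex matrix, has absolute value 1. Then every eigenvalue of γ is a root of unity; consequently γ is quasi-unipotent, i.e. there exists a positive integer m such that (γ^m − I)ⁿ = 0. -/

import Mathlib

open Polynomial IntermediateField

lemma root_of_unity_aux (n : ℕ) (γ : Matrix (Fin n) (Fin n) ℤ)
    (h : ∀ lam : ℂ, ((γ.map (Int.cast : ℤ → ℂ)).charpoly).IsRoot lam →
      ‖lam‖ = 1)
    (lam : ℂ) (hlam : ((γ.map (Int.cast : ℤ → ℂ)).charpoly).IsRoot lam) :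
    ∃ k : ℕ, 0 < k ∧ lam ^ k = 1 := by
  classical
  have hmap : (γ.map (Int.cast : ℤ → ℂ)).charpoly = γ.charpoly.map (Int.castRingHom ℂ) :=
    Matrix.charpoly_map γ (Int.castRingHom ℂ)
  have hroot : (γ.charpoly.map (Int.castRingHom ℂ)).eval lam = 0 := by
    rw [← hmap]; exact hlam
  have hint : IsIntegral ℤ lam := by
    refine ⟨γ.charpoly, γ.charpoly_monic, ?_⟩
    rwa [← Polynomial.eval_map]
  have hintQ : IsIntegral ℚ lam := hint.tower_top
  haveI : FiniteDimensional ℚ ℚ⟮lam⟯ := IntermediateField.adjoin.finiteDimensional hintQ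
  haveI : NumberField ℚ⟮lam⟯ := ⟨⟩
  set x : ℚ⟮lam⟯ := IntermediateField.AdjoinSimple.gen ℚ lam with hx
  have hxmap : algebraMap ℚ⟮lam⟯ ℂ x = lam := IntermediateField.AdjoinSimple.algebraMap_gen ℚ lam
  have hxint : IsIntegral ℤ x := by
    rwa [← isIntegral_algebraMap_iff (algebraMap ℚ⟮lam⟯ ℂ).injective, hxmap]
  have hnorm : ∀ φ : ℚ⟮lam⟯ →+* ℂ, ‖φ x‖ = 1 := by
    intro φ
    have hevalx : Polynomial.eval₂ (algebraMap ℤ ℚ⟮lam⟯) x γ.charpoly = 0 := by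
      have := congrArg (algebraMap ℚ⟮lam⟯ ℂ) (rfl : Polynomial.eval₂ (algebraMap ℤ ℚ⟮lam⟯) x γ.charpoly = Polynomial.eval₂ (algebraMap ℤ ℚ⟮lam⟯) x γ.charpoly)
      have h2 : (algebraMap ℚ⟮lam⟯ ℂ) (Polynomial.eval₂ (algebraMap ℤ ℚ⟮lam⟯) x γ.charpoly) = 0 := by
        rw [Polynomial.hom_eval₂, hxmap]
        have : (algebraMap ℚ⟮lam⟯ ℂ).comp (algebraMap ℤ ℚ⟮lam⟯) = Int.castRingHom ℂ :=
          Subsingleton.elim _ _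
        rw [this, ← Polynomial.eval_map]
        exact hroot
      exact (map_eq_zero_iff _ (algebraMap ℚ⟮lam⟯ ℂ).injective).mp h2
    have hφroot : ((γ.map (Int.cast : ℤ → ℂ)).charpoly).IsRoot (φ x) := by
      rw [hmap, Polynomial.IsRoot, Polynomial.eval_map]
      have : Polynomial.eval₂ (Int.castRingHom ℂ) (φ x) γ.charpoly
          = φ (Polynomial.eval₂ (algebraMap ℤ ℚ⟮lam⟯) x γ.charpoly) := by
        rw [Polynomial.hom_eval₂]
        congr 1
        exact Subsingleton.elim _ _
      rw [this, hevalx, map_zero]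
    exact h _ hφroot
  obtain ⟨k, hk, hxk⟩ := NumberField.Embeddings.pow_eq_one_of_norm_eq_one ℚ⟮lam⟯ ℂ hxint hnorm
  refine ⟨k, hk, ?_⟩
  have := congrArg (algebraMap ℚ⟮lam⟯ ℂ) hxk
  rwa [map_pow, map_one, hxmap] at this

/-- Kronecker's theorem / Borel's quasi-unipotence: if every complex eigenvalue of an
integer matrix `γ` has absolute value `1`, then every eigenvalue of `γ` is a root of
unity, and consequently `γ` is quasi-unipotent: `(γ^m - I)^n = 0` for some `m > 0`. -/
theorem integer_matrix_eigenvalues_abs_one_quasiunipotent (n : ℕ) (hn : 0 < n)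
    (γ : Matrix (Fin n) (Fin n) ℤ)
    (h : ∀ lam : ℂ, ((γ.map (Int.cast : ℤ → ℂ)).charpoly).IsRoot lam →
      ‖lam‖ = 1) :
    (∀ lam : ℂ, ((γ.map (Int.cast : ℤ → ℂ)).charpoly).IsRoot lam →
      ∃ k : ℕ, 0 < k ∧ lam ^ k = 1) ∧
    ∃ m : ℕ, 0 < m ∧ ((γ.map (Int.cast : ℤ → ℂ)) ^ m - 1) ^ n = 0 := by
  classical
  refine ⟨root_of_unity_aux n γ h, ?_⟩
  set q := (γ.map (Int.cast : ℤ → ℂ)).charpoly with hq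
  have hqmonic : q.Monic := Matrix.charpoly_monic _
  have hqsplits : q.Splits := IsAlgClosed.splits q
  have hdeg : q.natDegree = n := by
    rw [hq, Matrix.charpoly_natDegree_eq_dim, Fintype.card_fin]
  have hcard : Multiset.card q.roots = n := by
    rw [← hdeg]
    exact (Polynomial.splits_iff_card_roots.mp hqsplits)
  -- choose exponents
  set f : ℂ → ℕ := fun r => if hr : ∃ k : ℕ, 0 < k ∧ r ^ k = 1 then hr.choose else 1 with hf
  set m : ℕ := ∏ r ∈ q.roots.toFinset, f r with hm
  have hfpos : ∀ r, 0 < f r := by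
    intro r
    by_cases hr : ∃ k : ℕ, 0 < k ∧ r ^ k = 1
    · simp only [hf, dif_pos hr]; exact hr.choose_spec.1
    · simp [hf, dif_neg hr]
  have hmpos : 0 < m := Finset.prod_pos fun r _ => hfpos r
  have hrootm : ∀ r ∈ q.roots, r ^ m = 1 := by
    intro r hr
    have hroot : q.IsRoot r := Polynomial.isRoot_of_mem_roots hr
    have hre : ∃ k : ℕ, 0 < k ∧ r ^ k = 1 := root_of_unity_aux n γ h r hroot
    have hfr : r ^ f r = 1 := by
      simp only [hf, dif_pos hre]; exact hre.choose_spec.2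
    have hdvd : f r ∣ m := Finset.dvd_prod_of_mem f (Multiset.mem_toFinset.mpr hr)
    obtain ⟨c, hc⟩ := hdvd
    rw [hc, pow_mul, hfr, one_pow]
  -- q divides (X^m - 1)^n
  have hqprod : q = (q.roots.map fun r => X - C r).prod :=
    hqsplits.eq_prod_roots_of_monic hqmonic
  have hdvd : q ∣ (X ^ m - 1 : ℂ[X]) ^ n := by
    rw [hqprod]
    have h1 : (q.roots.map fun r => X - C r).prod ∣ (q.roots.map fun _ => (X ^ m - 1 : ℂ[X])).prod := by
      apply Multiset.prod_dvd_prod_of_dvd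
      intro r hr
      rw [Polynomial.dvd_iff_isRoot]
      simp [Polynomial.IsRoot, hrootm r hr]
    refine h1.trans ?_
    rw [Multiset.map_const', Multiset.prod_replicate, hcard]
  have hch : Polynomial.aeval (γ.map (Int.cast : ℤ → ℂ)) q = 0 := Matrix.aeval_self_charpoly _
  obtain ⟨c, hc⟩ := hdvd
  refine ⟨m, hmpos, ?_⟩
  have := congrArg (Polynomial.aeval (γ.map (Int.cast : ℤ → ℂ))) hc
  rw [map_mul, hch, zero_mul] at this
  rw [map_pow, map_sub, map_pow, Polynomial.aeval_X, Polynomial.aeval_one] at this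
  exact this
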